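/- Let ρ be a density matrix on ℂ²⊗ℂ² (a two-qubit state). Then the following are equivalent: (i) the PT-moments of ρ satisfy Tr[ρ^{T_A}] = 1, Tr[(ρ^{T_A})²] = 1, Tr[(ρ^{T_A})³] = 1/4 and Tr[(ρ^{T_A})⁴] = 1/4; (ii) ρ is maximally entangled, i.e. ρ = ψψᴴ for some maximally entangled unit vector ψ : Fin 2 × Fin 2 → ℂ. -/

import Mathlib

open Matrix Polynomial
open scoped ComplexOrder

noncomputable section

/-- Partial transpose on subsystem A of a bipartite matrix. -/
def ptA {m n : ℕ} (ρ : Matrix (Fin m × Fin n) (Fin m × Fin n) ℂ) :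
    Matrix (Fin m × Fin n) (Fin m × Fin n) ℂ :=
  fun p q => ρ (q.1, p.2) (p.1, q.2)

/-- A density matrix: positive semidefinite with trace one. -/
def IsDensityMatrix {k : Type*} [Fintype k] [DecidableEq k] (ρ : Matrix k k ℂ) : Prop :=
  ρ.PosSemidef ∧ ρ.trace = 1

open Classical in
/-- Minimal (real) eigenvalue of a Hermitian matrix (junk value 0 otherwise). -/
noncomputable def minEig {k : Type*} [Fintype k] [DecidableEq k] (A : Matrix k k ℂ) : ℝ :=
  if h : A.IsHermitian then ⨅ i, h.eigenvalues i else 0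

/-- The rank-one projection |ψ⟩⟨ψ| of a vector ψ. -/
def proj {k : Type*} [Fintype k] (ψ : k → ℂ) : Matrix k k ℂ :=
  Matrix.vecMulVec ψ (star ψ)

/-- A unit vector. -/
def IsUnitVec {k : Type*} [Fintype k] (ψ : k → ℂ) : Prop :=
  ∑ p, ‖ψ p‖ ^ 2 = 1

/-- Reduced matrix on subsystem A of a pure state ψ. -/
def reducedA {n : ℕ} (ψ : Fin n × Fin n → ℂ) : Matrix (Fin n) (Fin n) ℂ :=
  fun i k => ∑ j, ψ (i, j) * (starRingEnd ℂ) (ψ (k, j))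

/-- ψ is maximally entangled iff its reduced matrix is (1/n)·identity. -/
def MaxEntangled {n : ℕ} (ψ : Fin n × Fin n → ℂ) : Prop :=
  reducedA ψ = ((n : ℂ))⁻¹ • (1 : Matrix (Fin n) (Fin n) ℂ)

/-! ### Auxiliary lemmas -/

lemma trace_ptA (ρ : Matrix (Fin 2 × Fin 2) (Fin 2 × Fin 2) ℂ) :
    Matrix.trace (ptA ρ) = Matrix.trace ρ := by
  simp [Matrix.trace, ptA, Matrix.diag]

lemma trace_ptA_sq (ρ : Matrix (Fin 2 × Fin 2) (Fin 2 × Fin 2) ℂ) :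
    Matrix.trace ((ptA ρ) ^ 2) = Matrix.trace (ρ ^ 2) := by
  simp only [pow_two, Matrix.trace, Matrix.diag, Matrix.mul_apply, ptA,
    Fintype.sum_prod_type, Fin.sum_univ_two]
  ring

lemma trace_ptA_cube (ψ : Fin 2 × Fin 2 → ℂ) :
    Matrix.trace ((ptA (proj ψ)) ^ 3) = Matrix.trace ((reducedA ψ) ^ 3) := by
  simp only [pow_succ, pow_zero, Matrix.one_mul, Matrix.trace, Matrix.diag, Matrix.mul_apply,
    ptA, proj, Matrix.vecMulVec_apply, reducedA, Pi.star_apply, RCLike.star_def,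
    Fintype.sum_prod_type, Fin.sum_univ_two, Finset.sum_mul, Finset.mul_sum]
  ring

set_option maxHeartbeats 1000000 in
lemma trace_ptA_four (ψ : Fin 2 × Fin 2 → ℂ) :
    Matrix.trace ((ptA (proj ψ)) ^ 4) = (Matrix.trace ((reducedA ψ) ^ 2)) ^ 2 := by
  simp only [pow_succ, pow_zero, Matrix.one_mul, Matrix.trace, Matrix.diag, Matrix.mul_apply,
    ptA, proj, Matrix.vecMulVec_apply, reducedA, Pi.star_apply, RCLike.star_def,
    Fintype.sum_prod_type, Fin.sum_univ_two, Finset.sum_mul, Finset.mul_sum]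
  ring

lemma trace_proj_sq (ψ : Fin 2 × Fin 2 → ℂ) :
    Matrix.trace ((proj ψ) ^ 2) = (∑ p, ψ p * (starRingEnd ℂ) (ψ p)) ^ 2 := by
  simp only [pow_two, Matrix.trace, Matrix.diag, Matrix.mul_apply, proj,
    Matrix.vecMulVec_apply, Pi.star_apply, RCLike.star_def,
    Fintype.sum_prod_type, Fin.sum_univ_two]
  ring

lemma trace_proj (ψ : Fin 2 × Fin 2 → ℂ) :
    Matrix.trace (proj ψ) = ∑ p, ψ p * (starRingEnd ℂ) (ψ p) := by
  simp [Matrix.trace, proj, Matrix.vecMulVec_apply, Matrix.diag]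

lemma mc (z : ℂ) : z * (starRingEnd ℂ) z = ((‖z‖ ^ 2 : ℝ) : ℂ) := by
  rw [Complex.mul_conj, Complex.normSq_eq_norm_sq]

lemma purity {k : Type*} [Fintype k] [DecidableEq k] (ρ : Matrix k k ℂ)
    (hp : ρ.PosSemidef) (h1 : ρ.trace = 1) (h2 : (ρ ^ 2).trace = 1) :
    ∃ ψ : k → ℂ, IsUnitVec ψ ∧ ρ = proj ψ := by
  have hH := hp.1
  set lam := hH.eigenvalues with hlamdef
  set U : Matrix k k ℂ := (hH.eigenvectorUnitary : Matrix k k ℂ) with hU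
  have hUU : star U * U = 1 := hH.eigenvectorUnitary.2.1
  have hspec : ρ = U * Matrix.diagonal (RCLike.ofReal ∘ lam) * star U := hH.spectral_theorem
  have hnn : ∀ i, 0 ≤ lam i := fun i => hp.eigenvalues_nonneg i
  have htr : ∑ i, lam i = 1 := by
    have h1' := h1
    rw [hspec, Matrix.trace_mul_comm, ← Matrix.mul_assoc, hUU, Matrix.one_mul,
      Matrix.trace_diagonal] at h1'
    have h1'' : ((∑ i, lam i : ℝ) : ℂ) = 1 := by push_cast; simpa using h1'
    exact_mod_cast h1''
  have htr2 : ∑ i, lam i ^ 2 = 1 := by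
    have h2' := h2
    rw [pow_two, hspec] at h2'
    have hmm : (U * Matrix.diagonal (RCLike.ofReal ∘ lam) * star U) *
        (U * Matrix.diagonal (RCLike.ofReal ∘ lam) * star U)
        = U * (Matrix.diagonal (RCLike.ofReal ∘ lam) * Matrix.diagonal (RCLike.ofReal ∘ lam)) * star U := by
      simp only [Matrix.mul_assoc]
      rw [← Matrix.mul_assoc (star U) U, hUU, Matrix.one_mul]
    rw [hmm, Matrix.diagonal_mul_diagonal, Matrix.trace_mul_comm, ← Matrix.mul_assoc, hUU,
      Matrix.one_mul, Matrix.trace_diagonal] at h2'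
    have h2'' : ((∑ i, lam i ^ 2 : ℝ) : ℂ) = 1 := by push_cast; simpa [pow_two] using h2'
    exact_mod_cast h2''
  have hle1 : ∀ i, lam i ≤ 1 := by
    intro i
    calc lam i ≤ ∑ j, lam j := Finset.single_le_sum (fun j _ => hnn j) (Finset.mem_univ i)
    _ = 1 := htr
  have hsq : ∀ i, lam i ^ 2 = lam i := by
    have hzsum : ∑ i, (lam i - lam i ^ 2) = 0 := by
      rw [Finset.sum_sub_distrib, htr, htr2, sub_self]
    intro i
    have := (Finset.sum_eq_zero_iff_of_nonneg (fun j _ => by nlinarith [hnn j, hle1 j])).mp hzsum i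
      (Finset.mem_univ i)
    linarith
  have h01 : ∀ i, lam i = 0 ∨ lam i = 1 := by
    intro i
    have hfac : lam i * (lam i - 1) = 0 := by have := hsq i; ring_nf; nlinarith [hsq i]
    rcases mul_eq_zero.mp hfac with h' | h'
    · exact Or.inl h'
    · exact Or.inr (by linarith)
  obtain ⟨i0, hi0⟩ : ∃ i, lam i = 1 := by
    by_contra h
    push_neg at h
    have hall : ∀ i, lam i = 0 := by
      intro i; rcases h01 i with h' | h'
      · exact h'
      · exact absurd h' (h i)
    rw [Finset.sum_eq_zero (fun i _ => hall i)] at htr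
    norm_num at htr
  have hz : ∀ j, j ≠ i0 → lam j = 0 := by
    intro j hj
    have herase := Finset.add_sum_erase Finset.univ lam (Finset.mem_univ i0)
    have hsum : ∑ i ∈ Finset.univ.erase i0, lam i = 0 := by
      rw [htr] at herase; linarith
    exact (Finset.sum_eq_zero_iff_of_nonneg (fun j _ => hnn j)).mp hsum j
      (Finset.mem_erase.mpr ⟨hj, Finset.mem_univ j⟩)
  have hlam : ∀ a, lam a = if a = i0 then 1 else 0 := by
    intro a; by_cases h : a = i0
    · simp [h, hi0]
    · simp [h, hz a h]
  refine ⟨fun j => U j i0, ?_, ?_⟩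
  · have hcol := congrFun (congrFun hUU i0) i0
    simp only [Matrix.mul_apply, Matrix.one_apply_eq, Matrix.star_apply] at hcol
    have h' : ((∑ j, ‖U j i0‖ ^ 2 : ℝ) : ℂ) = 1 := by
      push_cast
      rw [← hcol]
      refine Finset.sum_congr rfl fun j _ => ?_
      rw [mul_comm, RCLike.star_def, Complex.mul_conj, Complex.normSq_eq_norm_sq]
      norm_cast
    exact_mod_cast h'
  · ext j l
    rw [hspec]
    simp only [Matrix.mul_apply, Matrix.diagonal_apply, Function.comp, hlam, proj,
      Matrix.vecMulVec_apply, Pi.star_apply, Matrix.star_apply, RCLike.star_def]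
    simp [Finset.sum_ite_eq', Finset.mul_sum, Finset.sum_mul, apply_ite, mul_comm]

lemma maxent (ψ : Fin 2 × Fin 2 → ℂ) (hu : IsUnitVec ψ)
    (h3 : Matrix.trace ((reducedA ψ) ^ 3) = 1/4) : MaxEntangled ψ := by
  set R := reducedA ψ with hRdef
  set a : ℝ := ∑ j, ‖ψ (0, j)‖ ^ 2 with hadef
  set d : ℝ := ∑ j, ‖ψ (1, j)‖ ^ 2 with hddef
  set b : ℂ := R 0 1 with hbdef
  have hR00 : R 0 0 = (a : ℂ) := by
    simp only [hRdef, reducedA, mc, hadef]; push_cast; rfl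
  have hR11 : R 1 1 = (d : ℂ) := by
    simp only [hRdef, reducedA, mc, hddef]; push_cast; rfl
  have hherm : R 1 0 = (starRingEnd ℂ) b := by
    simp only [hRdef, hbdef, reducedA, map_sum, _root_.map_mul, Complex.conj_conj,
      RingHomCompTriple.comp_apply]
    exact Finset.sum_congr rfl fun j _ => (mul_comm _ _)
  have hsum : a + d = 1 := by
    have h := hu
    rw [IsUnitVec, Fintype.sum_prod_type, Fin.sum_univ_two] at h
    exact h
  have hexp : Matrix.trace (R ^ 3)
      = R 0 0 ^ 3 + R 1 1 ^ 3 + 3 * (R 0 0 + R 1 1) * (R 0 1 * R 1 0) := by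
    simp only [pow_succ, pow_zero, Matrix.one_mul, Matrix.trace, Matrix.diag, Matrix.mul_apply,
      Fin.sum_univ_two]
    ring
  rw [hexp, hR00, hR11, hherm, ← hbdef, mc b] at h3
  push_cast at h3
  have hreal : a ^ 3 + d ^ 3 + 3 * (a + d) * ‖b‖ ^ 2 = 1/4 := by
    have hc : ((a ^ 3 + d ^ 3 + 3 * (a + d) * ‖b‖ ^ 2 : ℝ) : ℂ) = ((1/4 : ℝ) : ℂ) := by
      push_cast; linear_combination h3
    exact_mod_cast hc
  have hd1 : d = 1 - a := by linarith
  rw [hd1] at hreal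
  have key : 3 * (a - 1/2) ^ 2 + 3 * ‖b‖ ^ 2 = 0 := by linear_combination hreal
  have hb2 : ‖b‖ ^ 2 = 0 := by nlinarith [sq_nonneg (a - 1/2)]
  have hb0 : b = 0 := norm_eq_zero.mp (pow_eq_zero_iff two_ne_zero |>.mp hb2)
  have ha : a = 1/2 := by nlinarith [sq_nonneg ‖b‖]
  have hd : d = 1/2 := by rw [hd1, ha]; norm_num
  rw [MaxEntangled, ← hRdef]
  ext i k
  fin_cases i <;> fin_cases k <;>
    simp [hR00, hR11, ← hbdef, hherm, hb0, ha, hd, Matrix.one_apply] <;> norm_num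

theorem stmt5 (ρ : Matrix (Fin 2 × Fin 2) (Fin 2 × Fin 2) ℂ) (hρ : IsDensityMatrix ρ) :
    (Matrix.trace (ptA ρ) = 1 ∧ Matrix.trace ((ptA ρ) ^ 2) = 1 ∧
      Matrix.trace ((ptA ρ) ^ 3) = 1/4 ∧ Matrix.trace ((ptA ρ) ^ 4) = 1/4) ↔
      ∃ ψ : Fin 2 × Fin 2 → ℂ, IsUnitVec ψ ∧ MaxEntangled ψ ∧ ρ = proj ψ := by
  constructor
  · rintro ⟨h1, h2, h3, h4⟩
    have htr2 : Matrix.trace (ρ ^ 2) = 1 := by rw [← trace_ptA_sq]; exact h2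
    obtain ⟨ψ, hunit, hproj⟩ := purity ρ hρ.1 hρ.2 htr2
    rw [hproj] at h3
    rw [trace_ptA_cube] at h3
    exact ⟨ψ, hunit, maxent ψ hunit h3, hproj⟩
  · rintro ⟨ψ, hunit, hmax, rfl⟩
    have hsum1 : ∑ p, ψ p * (starRingEnd ℂ) (ψ p) = 1 := by
      simp only [mc]
      rw [← Complex.ofReal_sum, hunit, Complex.ofReal_one]
    have hmax' : reducedA ψ = ((2 : ℂ))⁻¹ • (1 : Matrix (Fin 2) (Fin 2) ℂ) := by
      have := hmax
      rw [MaxEntangled] at this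
      simpa using this
    refine ⟨?_, ?_, ?_, ?_⟩
    · rw [trace_ptA, trace_proj, hsum1]
    · rw [trace_ptA_sq, trace_proj_sq, hsum1, one_pow]
    · rw [trace_ptA_cube, hmax']
      simp [_root_.smul_pow, Matrix.trace_smul, Matrix.trace_one]
      norm_num
    · rw [trace_ptA_four, hmax']
      simp [_root_.smul_pow, Matrix.trace_smul, Matrix.trace_one]
      norm_num
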